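/- Let A, B, C, D be 3×3 real matrices with A symmetric positive definite and D symmetric. The block matrix [[A, B],[C, D]] (with C = B^T) is positive definite if and only if D - B^T A^{-1} B is positive definite (Schur complement criterion), and consequently, for the matrix Q = [[2 A_0 (K_P - α K_I) A_0, -α(A_0 K_P A_0 - A_0 ω_×)], [-α(A_0 K_P A_0 + ω_× A_0), 2α A_0]] with A_0, K_P, K_I symmetric positive definite and ω ∈ R^3 fixed, there exists α > 0 small enough that Q + Q^T is positive definite. -/

import Mathlib

open Matrix

/-- The cross-product matrix (cross operator) of a vector in ℝ³. -/
noncomputable def crossMat (x : Fin 3 → ℝ) : Matrix (Fin 3) (Fin 3) ℝ :=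
  !![0, -x 2, x 1; x 2, 0, -x 0; -x 1, x 0, 0]

section Aux

lemma sum_elim_ne_zero_left {x : Fin 3 → ℝ} (hx : x ≠ 0) (y : Fin 3 → ℝ) :
    Sum.elim x y ≠ 0 := by
  intro h
  apply hx
  ext i
  have := congrFun h (Sum.inl i)
  simpa using this

lemma sum_elim_ne_zero_right (x : Fin 3 → ℝ) {y : Fin 3 → ℝ} (hy : y ≠ 0) :
    Sum.elim x y ≠ 0 := by
  intro h
  apply hy
  ext i
  have := congrFun h (Sum.inr i)
  simpa using this

/-- Schur complement criterion, `₁₁` version, over ℝ, PosDef. -/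
lemma schur_posDef₁₁ (A B D : Matrix (Fin 3) (Fin 3) ℝ) (hA : A.PosDef) :
    (fromBlocks A B Bᵀ D).PosDef ↔ (D - Bᵀ * A⁻¹ * B).PosDef := by
  haveI : Invertible A := A.invertibleOfIsUnitDet (isUnit_iff_ne_zero.mpr hA.det_pos.ne')
  have hBt : Bᵀ = Bᴴ := (conjTranspose_eq_transpose_of_trivial B).symm
  rw [hBt, posDef_iff_dotProduct_mulVec, posDef_iff_dotProduct_mulVec]
  constructor
  · rintro ⟨hherm, hpos⟩
    refine ⟨(IsHermitian.fromBlocks₁₁ B D hA.1).mp hherm, fun y hy => ?_⟩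
    have h2 := hpos (x := Sum.elim (-((A⁻¹ * B) *ᵥ y)) y) (sum_elim_ne_zero_right _ hy)
    rw [dotProduct_mulVec, schur_complement_eq₁₁ B D _ _ hA.1] at h2
    simp only [neg_add_cancel, star_zero, zero_vecMul, zero_dotProduct, zero_add] at h2
    rwa [dotProduct_mulVec]
  · rintro ⟨hherm, hpos⟩
    refine ⟨(IsHermitian.fromBlocks₁₁ B D hA.1).mpr hherm, fun z hz => ?_⟩
    rw [dotProduct_mulVec, ← Sum.elim_comp_inl_inr z, schur_complement_eq₁₁ B D _ _ hA.1]
    by_cases hzr : z ∘ Sum.inr = 0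
    · have hzl : z ∘ Sum.inl ≠ 0 := by
        intro hl
        apply hz
        rw [← Sum.elim_comp_inl_inr z, hl, hzr]
        ext (i | i) <;> simp
      have h1 : 0 < star (z ∘ Sum.inl + (A⁻¹ * B) *ᵥ (z ∘ Sum.inr)) ᵥ* A ⬝ᵥ
          (z ∘ Sum.inl + (A⁻¹ * B) *ᵥ (z ∘ Sum.inr)) := by
        rw [← dotProduct_mulVec]
        apply hA.dotProduct_mulVec_pos
        rw [hzr]
        simpa using hzl
      have h2 : star (z ∘ Sum.inr) ᵥ* (D - Bᴴ * A⁻¹ * B) ⬝ᵥ (z ∘ Sum.inr) = 0 := by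
        rw [hzr]; simp
      rw [h2]
      linarith
    · have h1 : 0 ≤ star (z ∘ Sum.inl + (A⁻¹ * B) *ᵥ (z ∘ Sum.inr)) ᵥ* A ⬝ᵥ
          (z ∘ Sum.inl + (A⁻¹ * B) *ᵥ (z ∘ Sum.inr)) := by
        rw [← dotProduct_mulVec]
        exact hA.posSemidef.dotProduct_mulVec_nonneg _
      have h2 : 0 < star (z ∘ Sum.inr) ᵥ* (D - Bᴴ * A⁻¹ * B) ⬝ᵥ (z ∘ Sum.inr) := by
        rw [← dotProduct_mulVec]
        exact hpos hzr
      linarith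

/-- Schur complement criterion, `₂₂` version, over ℝ, PosDef. -/
lemma schur_posDef₂₂ (A B D : Matrix (Fin 3) (Fin 3) ℝ) (hD : D.PosDef) :
    (fromBlocks A B Bᵀ D).PosDef ↔ (A - B * D⁻¹ * Bᵀ).PosDef := by
  haveI : Invertible D := D.invertibleOfIsUnitDet (isUnit_iff_ne_zero.mpr hD.det_pos.ne')
  have hBt : Bᵀ = Bᴴ := (conjTranspose_eq_transpose_of_trivial B).symm
  rw [hBt, posDef_iff_dotProduct_mulVec, posDef_iff_dotProduct_mulVec]
  constructor
  · rintro ⟨hherm, hpos⟩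
    refine ⟨(IsHermitian.fromBlocks₂₂ A B hD.1).mp hherm, fun y hy => ?_⟩
    have h2 := hpos (x := Sum.elim y (-((D⁻¹ * Bᴴ) *ᵥ y))) (sum_elim_ne_zero_left hy _)
    rw [dotProduct_mulVec, schur_complement_eq₂₂ A B _ _ hD.1] at h2
    simp only [add_neg_cancel, star_zero, zero_vecMul, zero_dotProduct, zero_add] at h2
    rwa [dotProduct_mulVec]
  · rintro ⟨hherm, hpos⟩
    refine ⟨(IsHermitian.fromBlocks₂₂ A B hD.1).mpr hherm, fun z hz => ?_⟩
    rw [dotProduct_mulVec, ← Sum.elim_comp_inl_inr z, schur_complement_eq₂₂ A B _ _ hD.1]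
    by_cases hzl : z ∘ Sum.inl = 0
    · have hzr : z ∘ Sum.inr ≠ 0 := by
        intro hr
        apply hz
        rw [← Sum.elim_comp_inl_inr z, hzl, hr]
        ext (i | i) <;> simp
      have h1 : 0 < star ((D⁻¹ * Bᴴ) *ᵥ (z ∘ Sum.inl) + z ∘ Sum.inr) ᵥ* D ⬝ᵥ
          ((D⁻¹ * Bᴴ) *ᵥ (z ∘ Sum.inl) + z ∘ Sum.inr) := by
        rw [← dotProduct_mulVec]
        apply hD.dotProduct_mulVec_pos
        rw [hzl]
        simpa using hzr
      have h2 : star (z ∘ Sum.inl) ᵥ* (A - B * D⁻¹ * Bᴴ) ⬝ᵥ (z ∘ Sum.inl) = 0 := by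
        rw [hzl]; simp
      rw [h2]
      linarith
    · have h1 : 0 ≤ star ((D⁻¹ * Bᴴ) *ᵥ (z ∘ Sum.inl) + z ∘ Sum.inr) ᵥ* D ⬝ᵥ
          ((D⁻¹ * Bᴴ) *ᵥ (z ∘ Sum.inl) + z ∘ Sum.inr) := by
        rw [← dotProduct_mulVec]
        exact hD.posSemidef.dotProduct_mulVec_nonneg _
      have h2 : 0 < star (z ∘ Sum.inl) ᵥ* (A - B * D⁻¹ * Bᴴ) ⬝ᵥ (z ∘ Sum.inl) := by
        rw [← dotProduct_mulVec]
        exact hpos hzl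
      linarith

lemma dotProduct_self_pos' {x : Fin 3 → ℝ} (hx : x ≠ 0) : 0 < x ⬝ᵥ x := by
  obtain ⟨i, hi⟩ := Function.ne_iff.mp hx
  simp only [Pi.zero_apply] at hi
  unfold dotProduct
  exact Finset.sum_pos' (fun j _ => mul_self_nonneg _) ⟨i, Finset.mem_univ i, mul_self_pos.mpr hi⟩

open scoped MatrixOrder in
/-- coercivity of a positive definite quadratic form, elementary version. -/
lemma posDef_lower (S : Matrix (Fin 3) (Fin 3) ℝ) (hS : S.PosDef) :
    ∃ c : ℝ, 0 < c ∧ ∀ x : Fin 3 → ℝ, c * (x ⬝ᵥ x) ≤ x ⬝ᵥ S *ᵥ x := by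
  set B := CFC.sqrt S with hB
  have hBB : B * B = S := CFC.sqrt_mul_sqrt_self S hS.posSemidef.nonneg
  have hBherm : Bᵀ = B := by
    have := (CFC.sqrt_nonneg S).posSemidef.1
    rwa [IsHermitian, conjTranspose_eq_transpose_of_trivial] at this
  have hdet : IsUnit B.det := by
    have h1 : B.det * B.det = S.det := by rw [← det_mul, hBB]
    have h2 : (0:ℝ) < S.det := hS.det_pos
    refine isUnit_iff_ne_zero.mpr fun h => ?_
    rw [h, zero_mul] at h1
    exact h2.ne' h1.symm
  have hCB : B⁻¹ * B = 1 := nonsing_inv_mul _ hdet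
  set K : ℝ := ∑ i : Fin 3, ∑ j : Fin 3, (B⁻¹ i j)^2 with hK
  have hK0 : 0 ≤ K := Finset.sum_nonneg fun i _ => Finset.sum_nonneg fun j _ => sq_nonneg _
  refine ⟨(K+1)⁻¹, by positivity, fun x => ?_⟩
  set y := B *ᵥ x with hy
  have hxy : x = B⁻¹ *ᵥ y := by rw [hy, mulVec_mulVec, hCB, one_mulVec]
  have hq : x ⬝ᵥ S *ᵥ x = y ⬝ᵥ y := by
    rw [← hBB, ← mulVec_mulVec, dotProduct_mulVec, ← hBherm, vecMul_transpose, hBherm]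
  have hxx : x ⬝ᵥ x ≤ K * (y ⬝ᵥ y) := by
    rw [hxy]
    unfold dotProduct
    have key : ∀ i, (B⁻¹ *ᵥ y) i * (B⁻¹ *ᵥ y) i ≤ (∑ j, (B⁻¹ i j)^2) * (∑ j, (y j)^2) := by
      intro i
      calc (B⁻¹ *ᵥ y) i * (B⁻¹ *ᵥ y) i = (∑ j, B⁻¹ i j * y j)^2 := by
            simp [mulVec, dotProduct, sq]
        _ ≤ (∑ j, (B⁻¹ i j)^2) * (∑ j, (y j)^2) := by
            have h := Finset.sum_mul_sq_le_sq_mul_sq Finset.univ (fun j => B⁻¹ i j) (fun j => y j)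
            simpa [sq] using h
    calc ∑ i, (B⁻¹ *ᵥ y) i * (B⁻¹ *ᵥ y) i
        ≤ ∑ i, (∑ j, (B⁻¹ i j)^2) * (∑ j, (y j)^2) := Finset.sum_le_sum fun i _ => key i
      _ = K * ∑ j, y j * y j := by rw [hK, Finset.sum_mul]; simp [sq, Finset.sum_mul, mul_assoc]
  have hy0 : 0 ≤ y ⬝ᵥ y := by
    unfold dotProduct; exact Finset.sum_nonneg fun j _ => mul_self_nonneg _
  rw [hq]
  rw [inv_mul_le_iff₀ (by positivity)]
  have hend : K * (y ⬝ᵥ y) ≤ (K+1) * (y ⬝ᵥ y) := by nlinarith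
  calc x ⬝ᵥ x ≤ K * (y ⬝ᵥ y) := hxx
    _ ≤ (K+1) * (y ⬝ᵥ y) := hend

/-- entrywise upper bound for a quadratic form. -/
lemma quad_upper (T : Matrix (Fin 3) (Fin 3) ℝ) :
    ∃ C : ℝ, 0 ≤ C ∧ ∀ x : Fin 3 → ℝ, x ⬝ᵥ T *ᵥ x ≤ C * (x ⬝ᵥ x) := by
  refine ⟨∑ i : Fin 3, ∑ j : Fin 3, |T i j|,
    Finset.sum_nonneg fun i _ => Finset.sum_nonneg fun j _ => abs_nonneg _, fun x => ?_⟩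
  have hterm : ∀ i j : Fin 3, x i * (T i j * x j) ≤ |T i j| * (x ⬝ᵥ x) := by
    intro i j
    have h1 : x i * (T i j * x j) ≤ |T i j| * (|x i| * |x j|) := by
      calc x i * (T i j * x j) ≤ |x i * (T i j * x j)| := le_abs_self _
        _ = |T i j| * (|x i| * |x j|) := by rw [abs_mul, abs_mul]; ring
    have h2 : |x i| * |x j| ≤ x ⬝ᵥ x := by
      have hij : |x i| * |x j| ≤ (x i^2 + x j^2)/2 := by
        nlinarith [sq_nonneg (|x i| - |x j|), sq_abs (x i), sq_abs (x j)]
      have hi : x i^2 ≤ x ⬝ᵥ x := by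
        unfold dotProduct
        have h := Finset.single_le_sum (f := fun k => x k * x k)
          (fun k _ => mul_self_nonneg _) (Finset.mem_univ i)
        rw [sq]; simpa using h
      have hj : x j^2 ≤ x ⬝ᵥ x := by
        unfold dotProduct
        have h := Finset.single_le_sum (f := fun k => x k * x k)
          (fun k _ => mul_self_nonneg _) (Finset.mem_univ j)
        rw [sq]; simpa using h
      linarith
    calc x i * (T i j * x j) ≤ |T i j| * (|x i| * |x j|) := h1
      _ ≤ |T i j| * (x ⬝ᵥ x) := mul_le_mul_of_nonneg_left h2 (abs_nonneg _)
  calc x ⬝ᵥ T *ᵥ x = ∑ i, ∑ j, x i * (T i j * x j) := by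
        simp [dotProduct, mulVec, Finset.mul_sum]
    _ ≤ ∑ i, ∑ j, |T i j| * (x ⬝ᵥ x) :=
        Finset.sum_le_sum fun i _ => Finset.sum_le_sum fun j _ => hterm i j
    _ = (∑ i : Fin 3, ∑ j : Fin 3, |T i j|) * (x ⬝ᵥ x) := by
        rw [Finset.sum_mul]; congr 1; ext i; rw [Finset.sum_mul]

/-- for small positive α, S - α•T is positive definite. -/
lemma posDef_sub_smul (S T : Matrix (Fin 3) (Fin 3) ℝ) (hS : S.PosDef) (hT : Tᵀ = T) :
    ∃ α : ℝ, 0 < α ∧ (S - α • T).PosDef := by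
  obtain ⟨c, hc, hlow⟩ := posDef_lower S hS
  obtain ⟨C, hC, hupp⟩ := quad_upper T
  refine ⟨c/(C+1), by positivity, ?_⟩
  refine posDef_iff_dotProduct_mulVec.mpr ⟨?_, ?_⟩
  · have hSh : Sᵀ = S := by
      have := hS.1; rwa [IsHermitian, conjTranspose_eq_transpose_of_trivial] at this
    rw [IsHermitian, conjTranspose_eq_transpose_of_trivial, transpose_sub, transpose_smul, hSh, hT]
  · intro x hx
    rw [star_trivial]
    have hdp : 0 < x ⬝ᵥ x := dotProduct_self_pos' hx
    have h1 : x ⬝ᵥ (S - (c/(C+1)) • T) *ᵥ x = x ⬝ᵥ S *ᵥ x - (c/(C+1)) * (x ⬝ᵥ T *ᵥ x) := by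
      rw [sub_mulVec, dotProduct_sub, smul_mulVec, dotProduct_smul, smul_eq_mul]
    rw [h1]
    have h2 : (c/(C+1)) * (x ⬝ᵥ T *ᵥ x) ≤ (c/(C+1)) * (C * (x ⬝ᵥ x)) :=
      mul_le_mul_of_nonneg_left (hupp x) (by positivity)
    have h3 : c * (x ⬝ᵥ x) ≤ x ⬝ᵥ S *ᵥ x := hlow x
    have h4 : (c/(C+1)) * C < c := by
      rw [div_mul_eq_mul_div, div_lt_iff₀ (by positivity)]
      nlinarith
    nlinarith

lemma crossMat_transpose (x : Fin 3 → ℝ) : (crossMat x)ᵀ = -crossMat x := by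
  ext i j
  fin_cases i <;> fin_cases j <;> simp [crossMat]

lemma posDef_smul' {M : Matrix (Fin 3) (Fin 3) ℝ} (hM : M.PosDef) {c : ℝ} (hc : 0 < c) :
    (c • M).PosDef := by
  refine posDef_iff_dotProduct_mulVec.mpr ⟨?_, ?_⟩
  · have h := hM.1
    rw [IsHermitian, conjTranspose_eq_transpose_of_trivial] at h ⊢
    rw [transpose_smul, h]
  · intro x hx
    rw [star_trivial, smul_mulVec, dotProduct_smul, smul_eq_mul]
    have := hM.dotProduct_mulVec_pos hx
    rw [star_trivial] at this
    positivity

lemma posDef_conj {A0 K : Matrix (Fin 3) (Fin 3) ℝ} (hA0 : A0.PosDef) (hA0s : A0ᵀ = A0)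
    (hK : K.PosDef) : (A0 * K * A0).PosDef := by
  have hA0unit : IsUnit A0.det := isUnit_iff_ne_zero.mpr hA0.det_pos.ne'
  refine posDef_iff_dotProduct_mulVec.mpr ⟨?_, ?_⟩
  · have hKs : Kᵀ = K := by
      have := hK.1; rwa [IsHermitian, conjTranspose_eq_transpose_of_trivial] at this
    rw [IsHermitian, conjTranspose_eq_transpose_of_trivial]
    simp [transpose_mul, hA0s, hKs, Matrix.mul_assoc]
  · intro x hx
    rw [star_trivial]
    have hAx : A0 *ᵥ x ≠ 0 := by
      intro h
      apply hx
      have : A0⁻¹ *ᵥ (A0 *ᵥ x) = x := by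
        rw [mulVec_mulVec, nonsing_inv_mul _ hA0unit, one_mulVec]
      rw [h, mulVec_zero] at this
      exact this.symm
    have key : x ⬝ᵥ (A0 * K * A0) *ᵥ x = (A0 *ᵥ x) ⬝ᵥ K *ᵥ (A0 *ᵥ x) := by
      rw [Matrix.mul_assoc, ← mulVec_mulVec, dotProduct_mulVec, ← hA0s, vecMul_transpose,
        ← mulVec_mulVec, hA0s]
    rw [key]
    have := hK.dotProduct_mulVec_pos hAx
    rwa [star_trivial] at this

end Aux

theorem stmt_18 :
    -- Schur complement criterion
    (∀ A B D : Matrix (Fin 3) (Fin 3) ℝ, A.PosDef → Aᵀ = A → Dᵀ = D →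
      ((fromBlocks A B Bᵀ D).PosDef ↔ (D - Bᵀ * A⁻¹ * B).PosDef)) ∧
    -- consequence for the Lyapunov-derivative matrix Q
    (∀ A0 KP KI : Matrix (Fin 3) (Fin 3) ℝ, ∀ ω : Fin 3 → ℝ,
      A0.PosDef → A0ᵀ = A0 → KP.PosDef → KPᵀ = KP → KI.PosDef → KIᵀ = KI →
      ∃ α : ℝ, 0 < α ∧
        (let Q : Matrix (Fin 3 ⊕ Fin 3) (Fin 3 ⊕ Fin 3) ℝ :=
          fromBlocks ((2 : ℝ) • (A0 * (KP - α • KI) * A0))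
            (-(α • (A0 * KP * A0 - A0 * crossMat ω)))
            (-(α • (A0 * KP * A0 + crossMat ω * A0)))
            ((2 * α) • A0);
        (Q + Qᵀ).PosDef)) := by
  constructor
  · exact fun A B D hA _ _ => schur_posDef₁₁ A B D hA
  · intro A0 KP KI ω hA0 hA0s hKP hKPs hKI hKIs
    have hA0unit : IsUnit A0.det := isUnit_iff_ne_zero.mpr hA0.det_pos.ne'
    have hKIsym : (A0 * KI * A0)ᵀ = A0 * KI * A0 := by
      simp [transpose_mul, hA0s, hKIs, Matrix.mul_assoc]
    set P : Matrix (Fin 3) (Fin 3) ℝ := A0 * KP * A0 - A0 * crossMat ω with hPdef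
    set R : Matrix (Fin 3) (Fin 3) ℝ := A0 * KP * A0 + crossMat ω * A0 with hRdef
    have hRt : Rᵀ = P := by
      rw [hRdef, hPdef, transpose_add, transpose_mul, transpose_mul, transpose_mul,
        crossMat_transpose, hA0s, hKPs, sub_eq_add_neg]
      rw [Matrix.mul_neg]
      rw [Matrix.mul_assoc]
    have hPt : Pᵀ = R := by rw [← hRt, transpose_transpose]
    set S : Matrix (Fin 3) (Fin 3) ℝ := (4:ℝ) • (A0 * KP * A0) with hSdef
    set T : Matrix (Fin 3) (Fin 3) ℝ := (4:ℝ) • (A0 * KI * A0) + P * A0⁻¹ * R with hTdef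
    have hS : S.PosDef := posDef_smul' (posDef_conj hA0 hA0s hKP) (by norm_num)
    have hTt : Tᵀ = T := by
      rw [hTdef, transpose_add, transpose_smul, hKIsym, transpose_mul, transpose_mul,
        transpose_nonsing_inv, hA0s, hRt, hPt]
      simp [Matrix.mul_assoc]
    obtain ⟨α, hα, hST⟩ := posDef_sub_smul S T hS hTt
    refine ⟨α, hα, ?_⟩
    show (fromBlocks ((2 : ℝ) • (A0 * (KP - α • KI) * A0))
            (-(α • P)) (-(α • R)) ((2 * α) • A0) +
          (fromBlocks ((2 : ℝ) • (A0 * (KP - α • KI) * A0))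
            (-(α • P)) (-(α • R)) ((2 * α) • A0))ᵀ).PosDef
    have hα4 : (4 * α : ℝ) ≠ 0 := by positivity
    set M : Matrix (Fin 3) (Fin 3) ℝ :=
      (4:ℝ) • (A0 * KP * A0) - (4 * α) • (A0 * KI * A0) with hMdef
    set N : Matrix (Fin 3) (Fin 3) ℝ := -((2 * α) • P) with hNdef
    set Dm : Matrix (Fin 3) (Fin 3) ℝ := (4 * α) • A0 with hDdef
    have hD : Dm.PosDef := posDef_smul' hA0 (by positivity)
    have hNt : Nᵀ = -((2 * α) • R) := by rw [hNdef, transpose_neg, transpose_smul, hPt]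
    have hdecomp : fromBlocks ((2 : ℝ) • (A0 * (KP - α • KI) * A0))
            (-(α • P)) (-(α • R)) ((2 * α) • A0) +
          (fromBlocks ((2 : ℝ) • (A0 * (KP - α • KI) * A0))
            (-(α • P)) (-(α • R)) ((2 * α) • A0))ᵀ
          = fromBlocks M N Nᵀ Dm := by
      rw [fromBlocks_transpose, fromBlocks_add]
      have hX : ((2 : ℝ) • (A0 * (KP - α • KI) * A0))ᵀ = (2 : ℝ) • (A0 * (KP - α • KI) * A0) := by
        rw [transpose_smul, transpose_mul, transpose_mul, transpose_sub, transpose_smul,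
          hA0s, hKPs, hKIs, Matrix.mul_assoc]
      have hXe : A0 * (KP - α • KI) * A0 = A0 * KP * A0 - α • (A0 * KI * A0) := by
        rw [Matrix.mul_sub, Matrix.sub_mul, Matrix.mul_smul, Matrix.smul_mul]
      have h11 : (2 : ℝ) • (A0 * (KP - α • KI) * A0) +
          ((2 : ℝ) • (A0 * (KP - α • KI) * A0))ᵀ = M := by
        rw [hX, hXe, hMdef]; module
      have h12 : -(α • P) + (-(α • R))ᵀ = N := by
        rw [transpose_neg, transpose_smul, hRt, hNdef]; module
      have h21 : -(α • R) + (-(α • P))ᵀ = Nᵀ := by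
        rw [transpose_neg, transpose_smul, hPt, hNt]; module
      have h22 : (2 * α) • A0 + ((2 * α) • A0)ᵀ = Dm := by
        rw [transpose_smul, hA0s, hDdef]; module
      rw [h11, h12, h21, h22]
    rw [hdecomp, schur_posDef₂₂ M N Dm hD]
    have hDinv : Dm⁻¹ = (4 * α)⁻¹ • A0⁻¹ := by
      apply inv_eq_right_inv
      rw [hDdef, Matrix.smul_mul, Matrix.mul_smul, smul_smul, mul_inv_cancel₀ hα4,
        Matrix.mul_nonsing_inv _ hA0unit, one_smul]
    have hmid : N * Dm⁻¹ * Nᵀ = α • (P * A0⁻¹ * R) := by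
      rw [hDinv, hNt, hNdef]
      simp only [Matrix.neg_mul, Matrix.mul_neg, neg_neg, Matrix.smul_mul, Matrix.mul_smul,
        smul_smul, Matrix.mul_assoc]
      rw [smul_neg, neg_neg, smul_smul, ← Matrix.mul_assoc]
      congr 1
      field_simp
      ring
    have hcomp : M - N * Dm⁻¹ * Nᵀ = S - α • T := by
      rw [hmid, hMdef, hSdef, hTdef]; module
    rw [hcomp]
    exact hST
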